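/- arXiv:1907.05134 — 3 statements merged into one kernel-verified Lean document; each statement's English description precedes it below -/
import Mathlib

section
/- Let g be a symmetric positive definite 2×2 real matrix with entries g₁₁, g₁₂, g₂₂ and determinant D = g₁₁g₂₂ − g₁₂². Then the function f(θ) = √(g₁₁cos²θ + 2g₁₂cos θ sin θ + g₂₂sin²θ) satisfies the ODE (f'' + f)·P = f·sin θ + cos θ·f', where P(θ) = K₀cos³θ + K₁cos²θ sin θ + K₂cos θ sin²θ + K₃sin³θ with K₀ = g₁₂g₁₁/D, K₁ = 1 + 3g₁₂²/D, K₂ = 3g₂₂g₁₂/D, K₃ = g₂₂²/D. -/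
open Real

/-- The Riemannian norm `f(θ) = √(g₁₁cos²θ + 2g₁₂cosθ sinθ + g₂₂sin²θ)` of a
positive definite symmetric matrix `g` solves the ODE
`(f'' + f)·P = f·sin θ + cos θ·f'` with the stated coefficients. -/
theorem stmt_3 (g11 g12 g22 : ℝ) (h11 : 0 < g11) (h22 : 0 < g22)
    (hD : 0 < g11 * g22 - g12 ^ 2)
    (f P : ℝ → ℝ)
    (hf : ∀ θ : ℝ, f θ = Real.sqrt (g11 * Real.cos θ ^ 2
      + 2 * g12 * Real.cos θ * Real.sin θ + g22 * Real.sin θ ^ 2))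
    (K0 K1 K2 K3 : ℝ)
    (hK0 : K0 = g12 * g11 / (g11 * g22 - g12 ^ 2))
    (hK1 : K1 = 1 + 3 * g12 ^ 2 / (g11 * g22 - g12 ^ 2))
    (hK2 : K2 = 3 * g22 * g12 / (g11 * g22 - g12 ^ 2))
    (hK3 : K3 = g22 ^ 2 / (g11 * g22 - g12 ^ 2))
    (hP : ∀ θ : ℝ, P θ = K0 * Real.cos θ ^ 3 + K1 * Real.cos θ ^ 2 * Real.sin θ
      + K2 * Real.cos θ * Real.sin θ ^ 2 + K3 * Real.sin θ ^ 3) :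
    ∀ θ : ℝ, (deriv (deriv f) θ + f θ) * P θ
      = f θ * Real.sin θ + Real.cos θ * deriv f θ := by
  set Q : ℝ → ℝ := fun t => g11 * Real.cos t ^ 2
      + 2 * g12 * Real.cos t * Real.sin t + g22 * Real.sin t ^ 2 with hQdef
  set dQ : ℝ → ℝ := fun t => 2 * ((g22 - g11) * Real.sin t * Real.cos t
      + g12 * (Real.cos t ^ 2 - Real.sin t ^ 2)) with hdQdef
  set ddQ : ℝ → ℝ := fun t => 2 * ((g22 - g11) * (Real.cos t ^ 2 - Real.sin t ^ 2)
      - 4 * g12 * Real.sin t * Real.cos t) with hddQdef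
  have hQpos : ∀ t, 0 < Q t := by
    intro t
    have hpy := Real.sin_sq_add_cos_sq t
    simp only [hQdef]
    nlinarith [sq_nonneg (g11 * Real.cos t + g12 * Real.sin t),
      sq_nonneg (g22 * Real.sin t + g12 * Real.cos t),
      sq_nonneg (Real.sin t), sq_nonneg (Real.cos t)]
  have hQd : ∀ t, HasDerivAt Q (dQ t) t := by
    intro t
    have hc := Real.hasDerivAt_cos t
    have hs := Real.hasDerivAt_sin t
    have h := (((hc.pow 2).const_mul g11).add
      (((hc.const_mul (2 * g12)).mul hs).add ((hs.pow 2).const_mul g22)))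
    rw [hQdef, hdQdef]
    convert h using 1
    all_goals first
      | (funext x; simp only [Pi.add_apply, Pi.mul_apply, Pi.pow_apply, Pi.sub_apply]; push_cast; ring)
      | (beta_reduce; push_cast; ring)
      | rfl
  have hdQd : ∀ t, HasDerivAt dQ (ddQ t) t := by
    intro t
    have hc := Real.hasDerivAt_cos t
    have hs := Real.hasDerivAt_sin t
    have h := ((((hs.const_mul (g22 - g11)).mul hc).add
      (((hc.pow 2).sub (hs.pow 2)).const_mul g12)).const_mul 2)
    rw [hdQdef, hddQdef]
    convert h using 1
    all_goals first
      | (funext x; simp only [Pi.add_apply, Pi.mul_apply, Pi.pow_apply, Pi.sub_apply])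
      | (beta_reduce; push_cast; ring)
      | rfl
  have hfs : f = fun t => Real.sqrt (Q t) := funext fun t => hf t
  have hf' : ∀ t, HasDerivAt f (dQ t / (2 * Real.sqrt (Q t))) t := by
    intro t
    have h := (Real.hasDerivAt_sqrt (ne_of_gt (hQpos t))).comp t (hQd t)
    rw [hfs]
    convert h using 1
    all_goals first | rfl | rw [one_div_mul_eq_div]
  have hderivf : deriv f = fun t => dQ t / (2 * Real.sqrt (Q t)) :=
    funext fun t => (hf' t).deriv
  intro θ
  set c := Real.cos θ with hcdef
  set s := Real.sin θ with hsdef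
  have hpy : s ^ 2 + c ^ 2 = 1 := Real.sin_sq_add_cos_sq θ
  have hQv : 0 < Q θ := hQpos θ
  have hrpos : 0 < Real.sqrt (Q θ) := Real.sqrt_pos.2 hQv
  set r := Real.sqrt (Q θ) with hrdef
  have hr2 : r ^ 2 = Q θ := Real.sq_sqrt hQv.le
  have hrne : r ≠ 0 := ne_of_gt hrpos
  have hQne : Q θ ≠ 0 := ne_of_gt hQv
  have hden : (2 : ℝ) * r ≠ 0 := by positivity
  have hdenD : ∀ t, HasDerivAt (fun t => 2 * Real.sqrt (Q t))
      (2 * (1 / (2 * Real.sqrt (Q t)) * dQ t)) t := fun t =>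
    ((Real.hasDerivAt_sqrt (ne_of_gt (hQpos t))).comp t (hQd t)).const_mul 2
  have hf'' : HasDerivAt (deriv f)
      ((ddQ θ * (2 * r) - dQ θ * (2 * (1 / (2 * r) * dQ θ))) / (2 * r) ^ 2) θ := by
    rw [hderivf]
    exact (hdQd θ).div (hdenD θ) hden
  have hd2 : deriv (deriv f) θ
      = (ddQ θ * (2 * r) - dQ θ * (2 * (1 / (2 * r) * dQ θ))) / (2 * r) ^ 2 :=
    hf''.deriv
  -- key polynomial identity
  have key : (2 * Q θ * ddQ θ - dQ θ ^ 2 + 4 * Q θ ^ 2) * P θ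
      = 4 * Q θ ^ 2 * s + 2 * Q θ * dQ θ * c := by
    rw [hP, hK0, hK1, hK2, hK3]
    simp only [hQdef, hdQdef, hddQdef, ← hcdef, ← hsdef]
    have hDne : g11 * g22 - g12 ^ 2 ≠ 0 := ne_of_gt hD
    field_simp
    linear_combination ((-4)*g12^2*g22^2*s^5 + (-4)*g12^2*g22^2*c^2*s^3
      + (-12)*g12^3*g22*c*s^4 + (-12)*g12^3*g22*c^3*s^2 + (-8)*g12^4*c^2*s^3
      + (-8)*g12^4*c^4*s + (4)*g11*g22^3*s^5 + (4)*g11*g22^3*c^2*s^3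
      + (12)*g11*g12*g22^2*c*s^4 + (12)*g11*g12*g22^2*c^3*s^2
      + (4)*g11*g12^2*g22*c^2*s^3 + (4)*g11*g12^2*g22*c^4*s
      + (-4)*g11*g12^3*c^3*s^2 + (-4)*g11*g12^3*c^5
      + (4)*g11^2*g22^2*c^2*s^3 + (4)*g11^2*g22^2*c^4*s
      + (4)*g11^2*g12*g22*c^3*s^2 + (4)*g11^2*g12*g22*c^5) * hpy
  rw [hd2, hderivf, hf θ]
  show ((ddQ θ * (2 * r) - dQ θ * (2 * (1 / (2 * r) * dQ θ))) / (2 * r) ^ 2 + r) * P θ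
      = r * s + c * (dQ θ / (2 * r))
  have hL : (ddQ θ * (2 * r) - dQ θ * (2 * (1 / (2 * r) * dQ θ))) / (2 * r) ^ 2 + r
      = (2 * Q θ * ddQ θ - dQ θ ^ 2 + 4 * Q θ ^ 2) / (4 * Q θ * r) := by
    rw [← hr2]
    field_simp
    ring
  have hR : r * s + c * (dQ θ / (2 * r))
      = (4 * Q θ ^ 2 * s + 2 * Q θ * dQ θ * c) / (4 * Q θ * r) := by
    rw [← hr2]
    field_simp
    ring
  rw [hL, hR, div_mul_eq_mul_div, key]
end

section
/- Let n ≥ 2, let T^i_{jk} be a constant real tensor on ℝⁿ symmetric in the lower indices j,k, let σ be a nonzero constant covector, and let F : ℝⁿ \ {0} → ℝ be C³ and positively 1-homogeneous. If F satisfies T^i_{jk} F_{y^i y^s} y^k y^j = F·σ_s − σ₀·F_{y^s} for all s (where σ₀ = σ_i y^i), then F satisfies T^i_{jk} F_{y^i y^s} y^k − T^i_{sk} F_{y^i y^j} y^k = F_{y^j}·σ_s − σ_j·F_{y^s} for all j, s. Conversely, contracting the latter system with y^j recovers the former. -/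
open Real

/-- First partial derivative of `F` in the direction `y^i`. -/
noncomputable def pd {n : ℕ} (F : (Fin n → ℝ) → ℝ) (i : Fin n)
    (y : Fin n → ℝ) : ℝ :=
  fderiv ℝ F y (Pi.single i 1)

/-- Second partial derivative `F_{y^i y^s}`. -/
noncomputable def pd2 {n : ℕ} (F : (Fin n → ℝ) → ℝ) (i s : Fin n)
    (y : Fin n → ℝ) : ℝ :=
  fderiv ℝ (fun z => pd F i z) y (Pi.single s 1)

variable {n : ℕ}

lemma openU : IsOpen {y : Fin n → ℝ | y ≠ 0} := isOpen_compl_singleton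

lemma memU {y : Fin n → ℝ} (hy : y ≠ 0) : {y : Fin n → ℝ | y ≠ 0} ∈ nhds y :=
  openU.mem_nhds hy

/-- coordinate expansion of a continuous linear map -/
lemma clm_apply_eq_sum (L : (Fin n → ℝ) →L[ℝ] ℝ) (y : Fin n → ℝ) :
    L y = ∑ i, y i * L (Pi.single i 1) := by
  have hy : y = ∑ i, (y i) • (Pi.single i (1:ℝ) : Fin n → ℝ) := by
    funext j
    simp [Finset.sum_apply, Pi.single_apply]
  conv_lhs => rw [hy]
  rw [map_sum]
  simp

section euler
variable {g : (Fin n → ℝ) → ℝ} {y : Fin n → ℝ}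

lemma euler1' (hy : y ≠ 0) (hg : ∀ c : ℝ, 0 < c → g (c • y) = c * g y)
    (hd : DifferentiableAt ℝ g y) : fderiv ℝ g y y = g y := by
  have hcy : HasDerivAt (fun c : ℝ => c • y) y 1 := by
    simpa using (hasDerivAt_id (1:ℝ)).smul_const y
  have h1 : HasDerivAt (fun c : ℝ => g (c • y)) (fderiv ℝ g y y) 1 := by
    have hd' : HasFDerivAt g (fderiv ℝ g y) ((1:ℝ) • y) := by
      simpa using hd.hasFDerivAt
    have := hd'.comp_hasDerivAt 1 hcy
    exact this
  have heq : (fun c : ℝ => g (c • y)) =ᶠ[nhds 1] fun c => c * g y := by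
    filter_upwards [lt_mem_nhds (show (0:ℝ) < 1 by norm_num)] with c hc
    exact hg c hc
  have h2 : HasDerivAt (fun c : ℝ => c * g y) (g y) 1 := by
    simpa using (hasDerivAt_id (1:ℝ)).mul_const (g y)
  have := h1.deriv ▸ (heq.deriv_eq ▸ h2.deriv)
  linarith [h1.deriv, heq.deriv_eq, h2.deriv]

lemma euler0' (hy : y ≠ 0) (hg : ∀ c : ℝ, 0 < c → g (c • y) = g y)
    (hd : DifferentiableAt ℝ g y) : fderiv ℝ g y y = 0 := by
  have hcy : HasDerivAt (fun c : ℝ => c • y) y 1 := by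
    simpa using (hasDerivAt_id (1:ℝ)).smul_const y
  have h1 : HasDerivAt (fun c : ℝ => g (c • y)) (fderiv ℝ g y y) 1 := by
    have hd' : HasFDerivAt g (fderiv ℝ g y) ((1:ℝ) • y) := by
      simpa using hd.hasFDerivAt
    have := hd'.comp_hasDerivAt 1 hcy
    exact this
  have heq : (fun c : ℝ => g (c • y)) =ᶠ[nhds 1] fun _ => g y := by
    filter_upwards [lt_mem_nhds (show (0:ℝ) < 1 by norm_num)] with c hc
    exact hg c hc
  have h2 : deriv (fun _ : ℝ => g y) 1 = 0 := deriv_const _ _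
  linarith [h1.deriv, heq.deriv_eq, h2]

end euler

section main
variable {F : (Fin n → ℝ) → ℝ}

lemma FdiffAt (hC3 : ContDiffOn ℝ 3 F {y : Fin n → ℝ | y ≠ 0})
    {y : Fin n → ℝ} (hy : y ≠ 0) : DifferentiableAt ℝ F y :=
  (hC3.contDiffAt (memU hy)).differentiableAt (by norm_num)

lemma pdC2 (hC3 : ContDiffOn ℝ 3 F {y : Fin n → ℝ | y ≠ 0}) (i : Fin n) :
    ContDiffOn ℝ 2 (fun z => pd F i z) {y : Fin n → ℝ | y ≠ 0} := by
  have h := (hC3.fderiv_of_isOpen (m := 2) openU (by norm_num)).clm_apply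
    (contDiffOn_const (c := Pi.single i (1:ℝ)))
  exact h

lemma pd_diffAt (hC3 : ContDiffOn ℝ 3 F {y : Fin n → ℝ | y ≠ 0}) (i : Fin n)
    {y : Fin n → ℝ} (hy : y ≠ 0) : DifferentiableAt ℝ (fun z => pd F i z) y :=
  ((pdC2 hC3 i).contDiffAt (memU hy)).differentiableAt (by norm_num)

lemma pd2C1 (hC3 : ContDiffOn ℝ 3 F {y : Fin n → ℝ | y ≠ 0}) (i s : Fin n) :
    ContDiffOn ℝ 1 (fun z => pd2 F i s z) {y : Fin n → ℝ | y ≠ 0} := by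
  have h := ((pdC2 hC3 i).fderiv_of_isOpen (m := 1) openU (by norm_num)).clm_apply
    (contDiffOn_const (c := Pi.single s (1:ℝ)))
  exact h

lemma pd2_diffAt (hC3 : ContDiffOn ℝ 3 F {y : Fin n → ℝ | y ≠ 0}) (i s : Fin n)
    {y : Fin n → ℝ} (hy : y ≠ 0) : DifferentiableAt ℝ (fun z => pd2 F i s z) y :=
  ((pd2C1 hC3 i s).contDiffAt (memU hy)).differentiableAt (by norm_num)

lemma pd_hom (hhom : ∀ c : ℝ, 0 < c → ∀ y : Fin n → ℝ, F (c • y) = c * F y)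
    (hC3 : ContDiffOn ℝ 3 F {y : Fin n → ℝ | y ≠ 0}) (i : Fin n)
    {c : ℝ} (hc : 0 < c) {y : Fin n → ℝ} (hy : y ≠ 0) :
    pd F i (c • y) = pd F i y := by
  have hcy : c • y ≠ 0 := smul_ne_zero hc.ne' hy
  have hm : HasFDerivAt (fun z : Fin n → ℝ => c • z)
      (c • ContinuousLinearMap.id ℝ (Fin n → ℝ)) y := by
    simpa using (c • ContinuousLinearMap.id ℝ (Fin n → ℝ)).hasFDerivAt (x := y)
  have h1 : HasFDerivAt (fun z => F (c • z))
      ((fderiv ℝ F (c • y)).comp (c • ContinuousLinearMap.id ℝ (Fin n → ℝ))) y :=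
    (FdiffAt hC3 hcy).hasFDerivAt.comp y hm
  have h2 : HasFDerivAt (fun z => F (c • z)) (c • fderiv ℝ F y) y := by
    have : (fun z : Fin n → ℝ => F (c • z)) = fun z => c * F z := by
      funext z; exact hhom c hc z
    rw [this]
    exact (FdiffAt hC3 hy).hasFDerivAt.const_mul c
  have h3 := h1.unique h2
  have h4 := congrArg (fun L : (Fin n → ℝ) →L[ℝ] ℝ => L (Pi.single i 1)) h3
  simp only [ContinuousLinearMap.coe_comp', Function.comp_apply,
    ContinuousLinearMap.smul_apply, ContinuousLinearMap.coe_smul',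
    Pi.smul_apply, ContinuousLinearMap.coe_id', id_eq, smul_eq_mul] at h4
  have h5 : c * pd F i (c • y) = c * pd F i y := by
    unfold pd
    rw [← h4, map_smul]
    simp [smul_eq_mul]
  exact mul_left_cancel₀ hc.ne' h5

lemma euler_F (hhom : ∀ c : ℝ, 0 < c → ∀ y : Fin n → ℝ, F (c • y) = c * F y)
    (hC3 : ContDiffOn ℝ 3 F {y : Fin n → ℝ | y ≠ 0})
    {y : Fin n → ℝ} (hy : y ≠ 0) :
    ∑ i, y i * pd F i y = F y := by
  have h := euler1' hy (fun c hc => hhom c hc y) (FdiffAt hC3 hy)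
  rw [← h, clm_apply_eq_sum]
  rfl

lemma euler_pd (hhom : ∀ c : ℝ, 0 < c → ∀ y : Fin n → ℝ, F (c • y) = c * F y)
    (hC3 : ContDiffOn ℝ 3 F {y : Fin n → ℝ | y ≠ 0}) (i : Fin n)
    {y : Fin n → ℝ} (hy : y ≠ 0) :
    ∑ k, y k * pd2 F i k y = 0 := by
  have h := euler0' hy (fun c hc => pd_hom hhom hC3 i hc hy)
    (pd_diffAt hC3 i hy)
  rw [← h, clm_apply_eq_sum]
  rfl

end main

section fwd
variable {F : (Fin n → ℝ) → ℝ}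

noncomputable def proj (k : Fin n) : (Fin n → ℝ) →L[ℝ] ℝ :=
  ContinuousLinearMap.proj k

@[simp] lemma proj_apply (k : Fin n) (z : Fin n → ℝ) : proj k z = z k := rfl

lemma proj_single (k ℓ : Fin n) :
    proj k (Pi.single ℓ (1:ℝ)) = if k = ℓ then 1 else 0 := by
  simp [Pi.single_apply]

/-- derivative of one summand of Φ -/
lemma term_hasFDerivAt (hC3 : ContDiffOn ℝ 3 F {y : Fin n → ℝ | y ≠ 0})
    (c : ℝ) (i s j k : Fin n) {y : Fin n → ℝ} (hy : y ≠ 0) :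
    HasFDerivAt (fun z => c * pd2 F i s z * z k * z j)
      ((c * pd2 F i s y * y k) • proj j + (c * pd2 F i s y * y j) • proj k
        + (c * y k * y j) • fderiv ℝ (fun z => pd2 F i s z) y) y := by
  have h1 : HasFDerivAt (fun z => pd2 F i s z)
      (fderiv ℝ (fun z => pd2 F i s z) y) y := (pd2_diffAt hC3 i s hy).hasFDerivAt
  have hk : HasFDerivAt (fun z : Fin n → ℝ => z k) (proj k) y := by
    have := (proj (n := n) k).hasFDerivAt (x := y)
    convert this using 1
    rfl
  have hj : HasFDerivAt (fun z : Fin n → ℝ => z j) (proj j) y := by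
    have := (proj (n := n) j).hasFDerivAt (x := y)
    convert this using 1
    rfl
  have h := ((h1.const_mul c).mul hk).mul hj
  refine h.congr_fderiv ?_
  apply ContinuousLinearMap.ext
  intro v
  simp [smul_eq_mul]
  ring

lemma psi_hasFDerivAt (hC3 : ContDiffOn ℝ 3 F {y : Fin n → ℝ | y ≠ 0})
    (σ : Fin n → ℝ) (s : Fin n) {y : Fin n → ℝ} (hy : y ≠ 0) :
    HasFDerivAt (fun z => F z * σ s - (∑ i, σ i * z i) * pd F s z)
      (σ s • fderiv ℝ F y - ((∑ i, σ i * y i) • fderiv ℝ (fun z => pd F s z) y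
        + pd F s y • (∑ i, σ i • proj (n := n) i))) y := by
  have hLσ : HasFDerivAt (fun z : Fin n → ℝ => ∑ i, σ i * z i)
      (∑ i, σ i • proj (n := n) i) y := by
    have := (∑ i, σ i • proj (n := n) i).hasFDerivAt (x := y)
    convert this using 1
    funext z
    simp [smul_eq_mul]
  have hF : HasFDerivAt F (fderiv ℝ F y) y := (FdiffAt hC3 hy).hasFDerivAt
  have hpd : HasFDerivAt (fun z => pd F s z)
      (fderiv ℝ (fun z => pd F s z) y) y := (pd_diffAt hC3 s hy).hasFDerivAt
  exact (hF.mul_const (σ s)).sub (hLσ.mul hpd)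

lemma pd2_symm (hC3 : ContDiffOn ℝ 3 F {y : Fin n → ℝ | y ≠ 0})
    {y : Fin n → ℝ} (hy : y ≠ 0) (s ℓ : Fin n) :
    pd2 F s ℓ y = pd2 F ℓ s y := by
  have hsym : IsSymmSndFDerivAt ℝ F y :=
    (hC3.contDiffAt (memU hy)).isSymmSndFDerivAt (by norm_num)
  have hdf : DifferentiableAt ℝ (fderiv ℝ F) y :=
    ((hC3.fderiv_of_isOpen (m := 2) openU (by norm_num)).contDiffAt
      (memU hy)).differentiableAt (by norm_num)
  have key : ∀ a b : Fin n, pd2 F a b y =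
      fderiv ℝ (fderiv ℝ F) y (Pi.single b 1) (Pi.single a 1) := by
    intro a b
    have : pd2 F a b y = fderiv ℝ (fun z => fderiv ℝ F z (Pi.single a 1)) y
        (Pi.single b 1) := rfl
    rw [this, fderiv_clm_apply hdf (differentiableAt_const _)]
    simp
  rw [key, key, hsym]

lemma pd3_symm (hC3 : ContDiffOn ℝ 3 F {y : Fin n → ℝ | y ≠ 0})
    {y : Fin n → ℝ} (hy : y ≠ 0) (i s ℓ : Fin n) :
    fderiv ℝ (fun z => pd2 F i s z) y (Pi.single ℓ 1)
      = fderiv ℝ (fun z => pd2 F i ℓ z) y (Pi.single s 1) := by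
  have hsym : IsSymmSndFDerivAt ℝ (fun z => pd F i z) y :=
    ((pdC2 hC3 i).contDiffAt (memU hy)).isSymmSndFDerivAt (by norm_num)
  have hdf : DifferentiableAt ℝ (fderiv ℝ (fun z => pd F i z)) y :=
    (((pdC2 hC3 i).fderiv_of_isOpen (m := 1) openU (by norm_num)).contDiffAt
      (memU hy)).differentiableAt (by norm_num)
  have key : ∀ a b : Fin n, fderiv ℝ (fun z => pd2 F i a z) y (Pi.single b 1) =
      fderiv ℝ (fderiv ℝ (fun z => pd F i z)) y (Pi.single b 1) (Pi.single a 1) := by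
    intro a b
    have : (fun z => pd2 F i a z)
        = fun z => fderiv ℝ (fun w => pd F i w) z (Pi.single a 1) := rfl
    rw [this, fderiv_clm_apply hdf (differentiableAt_const _)]
    simp
  rw [key, key, hsym]

end fwd


/-- The system `T^i_{jk} F_{y^i y^s} y^k y^j = F σ_s − σ₀ F_{y^s}` is
equivalent to its prolongation
`T^i_{jk} F_{y^i y^s} y^k − T^i_{sk} F_{y^i y^j} y^k = F_{y^j} σ_s − σ_j F_{y^s}`. -/
theorem stmt_12 (n : ℕ) (hn : 2 ≤ n)
    (T : Fin n → Fin n → Fin n → ℝ)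
    (hTsym : ∀ i j k, T i j k = T i k j)
    (σ : Fin n → ℝ) (hσ : σ ≠ 0)
    (F : (Fin n → ℝ) → ℝ)
    (hhom : ∀ c : ℝ, 0 < c → ∀ y : Fin n → ℝ, F (c • y) = c * F y)
    (hC3 : ContDiffOn ℝ 3 F {y : Fin n → ℝ | y ≠ 0}) :
    (∀ y : Fin n → ℝ, y ≠ 0 → ∀ s : Fin n,
        ∑ i, ∑ j, ∑ k, T i j k * pd2 F i s y * y k * y j
          = F y * σ s - (∑ i, σ i * y i) * pd F s y)
    ↔ (∀ y : Fin n → ℝ, y ≠ 0 → ∀ j s : Fin n,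
        (∑ i, ∑ k, T i j k * pd2 F i s y * y k)
          - (∑ i, ∑ k, T i s k * pd2 F i j y * y k)
          = pd F j y * σ s - σ j * pd F s y) := by
  constructor
  · intro H y hy j s
    -- the differentiated ("prolonged") equation
    have star : ∀ ℓ s' : Fin n,
        (∑ i, ∑ jj, T i jj ℓ * pd2 F i s' y * y jj)
          + (∑ i, ∑ kk, T i ℓ kk * pd2 F i s' y * y kk)
          + ∑ i, ∑ jj, ∑ kk, T i jj kk * y kk * y jj
              * fderiv ℝ (fun z => pd2 F i s' z) y (Pi.single ℓ 1)
        = pd F ℓ y * σ s' - ((∑ i, σ i * y i) * pd2 F s' ℓ y + pd F s' y * σ ℓ) := by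
      intro ℓ s'
      have hΦ : HasFDerivAt
          (fun z => ∑ i, ∑ jj, ∑ kk, T i jj kk * pd2 F i s' z * z kk * z jj)
          (∑ i, ∑ jj, ∑ kk,
            ((T i jj kk * pd2 F i s' y * y kk) • proj jj
              + (T i jj kk * pd2 F i s' y * y jj) • proj kk
              + (T i jj kk * y kk * y jj) • fderiv ℝ (fun z => pd2 F i s' z) y)) y :=
        HasFDerivAt.fun_sum fun i _ => HasFDerivAt.fun_sum fun jj _ =>
          HasFDerivAt.fun_sum fun kk _ => term_hasFDerivAt hC3 (T i jj kk) i s' jj kk hy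
      have hΨ := psi_hasFDerivAt hC3 σ s' hy
      have hEq : (fun z => ∑ i, ∑ jj, ∑ kk, T i jj kk * pd2 F i s' z * z kk * z jj)
          =ᶠ[nhds y] (fun z => F z * σ s' - (∑ i, σ i * z i) * pd F s' z) := by
        filter_upwards [memU hy] with z hz
        exact H z hz s'
      have hD := hΦ.fderiv ▸ hΨ.fderiv ▸ hEq.fderiv_eq
      have hval := congrArg (fun L : (Fin n → ℝ) →L[ℝ] ℝ => L (Pi.single ℓ 1)) hD
      simp only [ContinuousLinearMap.sum_apply, ContinuousLinearMap.add_apply,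
        ContinuousLinearMap.sub_apply, ContinuousLinearMap.smul_apply, proj_single,
        smul_eq_mul, mul_ite, mul_one, mul_zero, Finset.sum_add_distrib,
        Finset.sum_ite_eq', Finset.mem_univ, if_true, Finset.sum_ite_irrel,
        Finset.sum_const_zero] at hval
      rw [show (fderiv ℝ F y) (Pi.single ℓ 1) = pd F ℓ y from rfl,
        show (fderiv ℝ (fun z => pd F s' z) y) (Pi.single ℓ 1) = pd2 F s' ℓ y from rfl]
        at hval
      linarith [hval]
    have h1 := star j s
    have h2 := star s j
    have hC : ∑ i, ∑ jj, ∑ kk, T i jj kk * y kk * y jj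
          * fderiv ℝ (fun z => pd2 F i s z) y (Pi.single j 1)
        = ∑ i, ∑ jj, ∑ kk, T i jj kk * y kk * y jj
          * fderiv ℝ (fun z => pd2 F i j z) y (Pi.single s 1) :=
      Finset.sum_congr rfl fun i _ => Finset.sum_congr rfl fun jj _ =>
        Finset.sum_congr rfl fun kk _ => by rw [pd3_symm hC3 hy i s j]
    have hp2 : pd2 F s j y = pd2 F j s y := pd2_symm hC3 hy s j
    have hT1 : ∑ i, ∑ jj, T i jj j * pd2 F i s y * y jj
        = ∑ i, ∑ kk, T i j kk * pd2 F i s y * y kk :=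
      Finset.sum_congr rfl fun i _ => Finset.sum_congr rfl fun jj _ => by
        rw [hTsym i jj j]
    have hT2 : ∑ i, ∑ jj, T i jj s * pd2 F i j y * y jj
        = ∑ i, ∑ kk, T i s kk * pd2 F i j y * y kk :=
      Finset.sum_congr rfl fun i _ => Finset.sum_congr rfl fun jj _ => by
        rw [hTsym i jj s]
    rw [hT1, hC, hp2] at h1
    rw [hT2] at h2
    linarith
  · intro H y hy s
    have h : ∑ j, y j * ((∑ i, ∑ k, T i j k * pd2 F i s y * y k)
          - (∑ i, ∑ k, T i s k * pd2 F i j y * y k))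
        = ∑ j, y j * (pd F j y * σ s - σ j * pd F s y) :=
      Finset.sum_congr rfl fun j _ => by rw [H y hy j s]
    have hA : ∑ j, y j * (∑ i, ∑ k, T i j k * pd2 F i s y * y k)
        = ∑ i, ∑ j, ∑ k, T i j k * pd2 F i s y * y k * y j := by
      simp only [Finset.mul_sum]
      rw [Finset.sum_comm]
      exact Finset.sum_congr rfl fun i _ => Finset.sum_congr rfl fun j _ =>
        Finset.sum_congr rfl fun k _ => by ring
    have hB : ∑ j, y j * (∑ i, ∑ k, T i s k * pd2 F i j y * y k) = 0 := by
      simp only [Finset.mul_sum]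
      rw [Finset.sum_comm]
      refine Finset.sum_eq_zero fun i _ => ?_
      rw [Finset.sum_comm]
      refine Finset.sum_eq_zero fun k _ => ?_
      have h0 := euler_pd hhom hC3 i hy
      calc ∑ j, y j * (T i s k * pd2 F i j y * y k)
          = (T i s k * y k) * ∑ j, y j * pd2 F i j y := by
            rw [Finset.mul_sum]
            exact Finset.sum_congr rfl fun j _ => by ring
        _ = 0 := by rw [h0, mul_zero]
    have hR : ∑ j, y j * (pd F j y * σ s - σ j * pd F s y)
        = F y * σ s - (∑ i, σ i * y i) * pd F s y := by
      rw [← euler_F hhom hC3 hy]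
      rw [Finset.sum_mul, Finset.sum_mul, ← Finset.sum_sub_distrib]
      exact Finset.sum_congr rfl fun j _ => by ring
    calc ∑ i, ∑ j, ∑ k, T i j k * pd2 F i s y * y k * y j
        = (∑ j, y j * (∑ i, ∑ k, T i j k * pd2 F i s y * y k))
          - (∑ j, y j * (∑ i, ∑ k, T i s k * pd2 F i j y * y k)) := by
          rw [hA, hB]; ring
      _ = ∑ j, y j * ((∑ i, ∑ k, T i j k * pd2 F i s y * y k)
            - (∑ i, ∑ k, T i s k * pd2 F i j y * y k)) := by
          rw [← Finset.sum_sub_distrib]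
          exact Finset.sum_congr rfl fun j _ => (mul_sub _ _ _).symm
      _ = ∑ j, y j * (pd F j y * σ s - σ j * pd F s y) := h
      _ = F y * σ s - (∑ i, σ i * y i) * pd F s y := hR
end

section
/- Let F : ℝ² \ {0} → ℝ be positively 1-homogeneous and C² with f(θ) := F(cos θ, sin θ), and let T^i_{jk} (i,j,k ∈ {1,2}) be constants symmetric in j,k, and σ = (1, 0). Then the system T^i_{jk} F_{y^i y^s} y^k y^j = F·σ_s − σ₀·F_{y^s} (s = 1,2) holds for all y ≠ 0 if and only if f satisfies the single ODE (f''(θ) + f(θ))·P(θ) = f(θ)sin θ + cos θ·f'(θ), where P(θ) = K₀cos³θ + K₁cos²θ sin θ + K₂cos θ sin²θ + K₃sin³θ with K₀ = −T²₁₁, K₁ = T¹₁₁ − 2T²₁₂, K₂ = 2T¹₁₂ − T²₂₂, K₃ = T¹₂₂. -/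
open Real

namespace Aux17

lemma vec_decomp (v : Fin 2 → ℝ) :
    v = v 0 • (Pi.single (0 : Fin 2) (1:ℝ) : Fin 2 → ℝ)
      + v 1 • (Pi.single (1 : Fin 2) (1:ℝ) : Fin 2 → ℝ) := by
  funext i; fin_cases i <;> simp

lemma clm_eval (L : (Fin 2 → ℝ) →L[ℝ] ℝ) (v : Fin 2 → ℝ) :
    L v = v 0 * L (Pi.single 0 1) + v 1 * L (Pi.single 1 1) := by
  conv_lhs => rw [vec_decomp v]
  simp

lemma hopen : IsOpen {y : Fin 2 → ℝ | y ≠ 0} := isOpen_ne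

variable {F : (Fin 2 → ℝ) → ℝ}

section Smooth
variable (hC2 : ContDiffOn ℝ 2 F {y : Fin 2 → ℝ | y ≠ 0})
include hC2

lemma hCat {y : Fin 2 → ℝ} (hy : y ≠ 0) : ContDiffAt ℝ 2 F y :=
  hC2.contDiffAt (hopen.mem_nhds hy)

lemma hdF {y : Fin 2 → ℝ} (hy : y ≠ 0) : DifferentiableAt ℝ F y :=
  (hCat hC2 hy).differentiableAt two_ne_zero

lemma hdF' {y : Fin 2 → ℝ} (hy : y ≠ 0) : DifferentiableAt ℝ (fderiv ℝ F) y :=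
  ((hCat hC2 hy).fderiv_right (m := 1) (le_refl 2)).differentiableAt one_ne_zero

lemma hdpd {y : Fin 2 → ℝ} (hy : y ≠ 0) (i : Fin 2) :
    DifferentiableAt ℝ (fun z => pd F i z) y :=
  (hdF' hC2 hy).clm_apply (differentiableAt_const _)

lemma fderiv_pd {y : Fin 2 → ℝ} (hy : y ≠ 0) (i : Fin 2) (v : Fin 2 → ℝ) :
    fderiv ℝ (fun z => pd F i z) y v = fderiv ℝ (fderiv ℝ F) y v (Pi.single i 1) := by
  unfold pd
  rw [fderiv_clm_apply (hdF' hC2 hy) (differentiableAt_const _)]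
  simp

lemma pd2_symm {y : Fin 2 → ℝ} (hy : y ≠ 0) (i s : Fin 2) :
    pd2 F i s y = pd2 F s i y := by
  unfold pd2
  rw [fderiv_pd hC2 hy, fderiv_pd hC2 hy]
  exact ((hCat hC2 hy).isSymmSndFDerivAt (by simp [minSmoothness_of_isRCLikeNormedField])) _ _

end Smooth

section Hom
variable (hhom : ∀ c : ℝ, 0 < c → ∀ y : Fin 2 → ℝ, F (c • y) = c * F y)
variable (hC2 : ContDiffOn ℝ 2 F {y : Fin 2 → ℝ | y ≠ 0})
include hhom hC2

lemma euler1 {y : Fin 2 → ℝ} (hy : y ≠ 0) :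
    y 0 * pd F 0 y + y 1 * pd F 1 y = F y := by
  have hinner : HasDerivAt (fun c : ℝ => c • y) y 1 := by
    simpa using (hasDerivAt_id (1:ℝ)).smul_const y
  have h1 : HasDerivAt (fun c : ℝ => F (c • y)) (fderiv ℝ F y y) 1 := by
    have hF' : HasFDerivAt F (fderiv ℝ F y) ((1:ℝ) • y) := by
      rw [one_smul]; exact (hdF hC2 hy).hasFDerivAt
    exact hF'.comp_hasDerivAt 1 hinner
  have h2 : HasDerivAt (fun c : ℝ => F (c • y)) (F y) 1 := by
    have ha : HasDerivAt (fun c : ℝ => c * F y) (F y) 1 := by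
      simpa using (hasDerivAt_id (1:ℝ)).mul_const (F y)
    apply ha.congr_of_eventuallyEq
    filter_upwards [Ioi_mem_nhds (show (0:ℝ) < 1 by norm_num)] with c hc
    exact hhom c hc y
  have key : fderiv ℝ F y y = F y := h1.unique h2
  rw [← key, clm_eval]; rfl

lemma pd_scale {c : ℝ} (hc : 0 < c) {y : Fin 2 → ℝ} (hy : y ≠ 0) (i : Fin 2) :
    pd F i (c • y) = pd F i y := by
  have hcy : c • y ≠ 0 := smul_ne_zero (ne_of_gt hc) hy
  have hinner : HasFDerivAt (fun z : Fin 2 → ℝ => c • z)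
      (c • ContinuousLinearMap.id ℝ (Fin 2 → ℝ)) y := (hasFDerivAt_id y).const_smul c
  have h1 : HasFDerivAt (fun z => F (c • z))
      ((fderiv ℝ F (c • y)).comp (c • ContinuousLinearMap.id ℝ (Fin 2 → ℝ))) y :=
    (hdF hC2 hcy).hasFDerivAt.comp y hinner
  have h2 : HasFDerivAt (fun z => c * F z) (c • fderiv ℝ F y) y :=
    (hdF hC2 hy).hasFDerivAt.const_mul c
  have hfun : (fun z => F (c • z)) = fun z => c * F z := funext fun z => hhom c hc z
  rw [hfun] at h1
  have key := h1.unique h2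
  have := congrArg (fun L => L (Pi.single i 1)) key
  simp only [ContinuousLinearMap.coe_comp', Function.comp_apply,
    ContinuousLinearMap.smul_apply, ContinuousLinearMap.coe_smul',
    ContinuousLinearMap.coe_id', Pi.smul_apply, id_eq] at this
  have : c * pd F i (c • y) = c * pd F i y := by
    unfold pd
    simpa [map_smul, smul_eq_mul] using this
  exact mul_left_cancel₀ (ne_of_gt hc) this

lemma pd2_scale {c : ℝ} (hc : 0 < c) {y : Fin 2 → ℝ} (hy : y ≠ 0) (i s : Fin 2) :
    c * pd2 F i s (c • y) = pd2 F i s y := by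
  have hcy : c • y ≠ 0 := smul_ne_zero (ne_of_gt hc) hy
  have hev : (fun z => pd F i (c • z)) =ᶠ[nhds y] (fun z => pd F i z) := by
    filter_upwards [hopen.mem_nhds hy] with z hz
    exact pd_scale hhom hC2 hc hz i
  have hinner : HasFDerivAt (fun z : Fin 2 → ℝ => c • z)
      (c • ContinuousLinearMap.id ℝ (Fin 2 → ℝ)) y := (hasFDerivAt_id y).const_smul c
  have h1 : HasFDerivAt (fun z => pd F i (c • z))
      ((fderiv ℝ (fun z => pd F i z) (c • y)).comp
        (c • ContinuousLinearMap.id ℝ (Fin 2 → ℝ))) y :=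
    (hdpd hC2 hcy i).hasFDerivAt.comp y hinner
  have h2 : fderiv ℝ (fun z => pd F i (c • z)) y = fderiv ℝ (fun z => pd F i z) y :=
    hev.fderiv_eq
  have key := h1.fderiv.symm.trans h2
  have := congrArg (fun L => L (Pi.single s 1)) key
  simp only [ContinuousLinearMap.coe_comp', Function.comp_apply,
    ContinuousLinearMap.smul_apply, ContinuousLinearMap.coe_smul',
    ContinuousLinearMap.coe_id', Pi.smul_apply, id_eq] at this
  unfold pd2
  simpa [map_smul, smul_eq_mul] using this

lemma euler2 {y : Fin 2 → ℝ} (hy : y ≠ 0) (i : Fin 2) :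
    y 0 * pd2 F i 0 y + y 1 * pd2 F i 1 y = 0 := by
  have hinner : HasDerivAt (fun c : ℝ => c • y) y 1 := by
    simpa using (hasDerivAt_id (1:ℝ)).smul_const y
  have h1 : HasDerivAt (fun c : ℝ => pd F i (c • y))
      (fderiv ℝ (fun z => pd F i z) y y) 1 := by
    have hF' : HasFDerivAt (fun z => pd F i z) (fderiv ℝ (fun z => pd F i z) y)
        ((1:ℝ) • y) := by
      rw [one_smul]; exact (hdpd hC2 hy i).hasFDerivAt
    exact hF'.comp_hasDerivAt 1 hinner
  have h2 : HasDerivAt (fun c : ℝ => pd F i (c • y)) 0 1 := by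
    apply (hasDerivAt_const (1:ℝ) (pd F i y)).congr_of_eventuallyEq
    filter_upwards [Ioi_mem_nhds (show (0:ℝ) < 1 by norm_num)] with c hc
    exact pd_scale hhom hC2 hc hy i
  have key : fderiv ℝ (fun z => pd F i z) y y = 0 := h1.unique h2
  rw [clm_eval] at key
  exact key

end Hom


section Circle

noncomputable def u (θ : ℝ) : Fin 2 → ℝ := ![Real.cos θ, Real.sin θ]

lemma u_ne (θ : ℝ) : u θ ≠ 0 := by
  intro h
  have h0 := congrFun h 0
  have h1 := congrFun h 1
  simp only [u, Matrix.cons_val_zero, Matrix.cons_val_one, Matrix.head_cons,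
    Pi.zero_apply] at h0 h1
  have := Real.sin_sq_add_cos_sq θ
  rw [h0, h1] at this; norm_num at this

lemma hasDerivAt_u (θ : ℝ) : HasDerivAt u ![-Real.sin θ, Real.cos θ] θ := by
  rw [hasDerivAt_pi]
  intro i
  fin_cases i
  · simp only [u, Matrix.cons_val_zero]
    simpa using Real.hasDerivAt_cos θ
  · simp only [u, Matrix.cons_val_one, Matrix.head_cons]
    simpa using Real.hasDerivAt_sin θ

variable {F : (Fin 2 → ℝ) → ℝ} {f : ℝ → ℝ}
variable (hhom : ∀ c : ℝ, 0 < c → ∀ y : Fin 2 → ℝ, F (c • y) = c * F y)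
variable (hC2 : ContDiffOn ℝ 2 F {y : Fin 2 → ℝ | y ≠ 0})
variable (hf : ∀ θ : ℝ, f θ = F ![Real.cos θ, Real.sin θ])
include hC2 hf

lemma hasDerivAt_f (θ : ℝ) :
    HasDerivAt f (-Real.sin θ * pd F 0 (u θ) + Real.cos θ * pd F 1 (u θ)) θ := by
  have hfe : f = fun t => F (u t) := funext fun t => hf t
  have hF' : HasFDerivAt F (fderiv ℝ F (u θ)) (u θ) := (hdF hC2 (u_ne θ)).hasFDerivAt
  have h := hF'.comp_hasDerivAt θ (hasDerivAt_u θ)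
  have hv : fderiv ℝ F (u θ) ![-Real.sin θ, Real.cos θ]
      = -Real.sin θ * pd F 0 (u θ) + Real.cos θ * pd F 1 (u θ) := by
    rw [clm_eval]
    simp [pd]
  rw [hfe]
  rw [hv] at h
  exact h

lemma hasDerivAt_pd_u (i : Fin 2) (θ : ℝ) :
    HasDerivAt (fun t => pd F i (u t))
      (-Real.sin θ * pd2 F i 0 (u θ) + Real.cos θ * pd2 F i 1 (u θ)) θ := by
  have hF' : HasFDerivAt (fun z => pd F i z) (fderiv ℝ (fun z => pd F i z) (u θ)) (u θ) :=
    (hdpd hC2 (u_ne θ) i).hasFDerivAt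
  have h := hF'.comp_hasDerivAt θ (hasDerivAt_u θ)
  have hv : fderiv ℝ (fun z => pd F i z) (u θ) ![-Real.sin θ, Real.cos θ]
      = -Real.sin θ * pd2 F i 0 (u θ) + Real.cos θ * pd2 F i 1 (u θ) := by
    rw [clm_eval]
    simp [pd2]
  rw [hv] at h
  exact h

lemma deriv_f (θ : ℝ) :
    deriv f θ = -Real.sin θ * pd F 0 (u θ) + Real.cos θ * pd F 1 (u θ) :=
  (hasDerivAt_f hC2 hf θ).deriv

lemma deriv_deriv_f (θ : ℝ) :
    deriv (deriv f) θ
      = -(Real.cos θ * pd F 0 (u θ) + Real.sin θ * pd F 1 (u θ))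
        + (Real.sin θ ^ 2 * pd2 F 0 0 (u θ) - Real.sin θ * Real.cos θ * pd2 F 0 1 (u θ)
          - Real.sin θ * Real.cos θ * pd2 F 1 0 (u θ) + Real.cos θ ^ 2 * pd2 F 1 1 (u θ)) := by
  have hg : deriv f = fun t => -Real.sin t * pd F 0 (u t) + Real.cos t * pd F 1 (u t) :=
    funext fun t => deriv_f hC2 hf t
  rw [hg]
  have h := (((Real.hasDerivAt_sin θ).neg.mul (hasDerivAt_pd_u hC2 hf 0 θ)).add
    ((Real.hasDerivAt_cos θ).mul (hasDerivAt_pd_u hC2 hf 1 θ))).deriv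
  refine h.trans ?_; simp only [Pi.neg_apply]; ring

include hhom

lemma circle (θ : ℝ) :
    F (u θ) = f θ
    ∧ pd F 0 (u θ) = Real.cos θ * f θ - Real.sin θ * deriv f θ
    ∧ pd F 1 (u θ) = Real.sin θ * f θ + Real.cos θ * deriv f θ
    ∧ pd2 F 0 0 (u θ) = (deriv (deriv f) θ + f θ) * Real.sin θ ^ 2
    ∧ pd2 F 0 1 (u θ) = -((deriv (deriv f) θ + f θ) * Real.sin θ * Real.cos θ)
    ∧ pd2 F 1 0 (u θ) = -((deriv (deriv f) θ + f θ) * Real.sin θ * Real.cos θ)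
    ∧ pd2 F 1 1 (u θ) = (deriv (deriv f) θ + f θ) * Real.cos θ ^ 2 := by
  set c := Real.cos θ with hcdef
  set s := Real.sin θ with hsdef
  have hp : s ^ 2 + c ^ 2 = 1 := Real.sin_sq_add_cos_sq θ
  have hu0 : u θ 0 = c := rfl
  have hu1 : u θ 1 = s := rfl
  have hFu : F (u θ) = f θ := (hf θ).symm
  set p0 := pd F 0 (u θ)
  set p1 := pd F 1 (u θ)
  set a := pd2 F 0 0 (u θ)
  set b := pd2 F 0 1 (u θ)
  set b' := pd2 F 1 0 (u θ)
  set d := pd2 F 1 1 (u θ)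
  set L := deriv (deriv f) θ + f θ with hLdef
  have hE : c * p0 + s * p1 = f θ := by
    have := euler1 hhom hC2 (u_ne θ)
    rw [hu0, hu1, hFu] at this; exact this
  have hD : deriv f θ = -s * p0 + c * p1 := deriv_f hC2 hf θ
  have hr0 : c * a + s * b = 0 := by
    have := euler2 hhom hC2 (u_ne θ) 0
    rw [hu0, hu1] at this; exact this
  have hr1 : c * b' + s * d = 0 := by
    have := euler2 hhom hC2 (u_ne θ) 1
    rw [hu0, hu1] at this; exact this
  have hsym : b = b' := pd2_symm hC2 (u_ne θ) 0 1
  have hr2 : c * b + s * d = 0 := by rw [hsym]; exact hr1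
  have hL2 : deriv (deriv f) θ = -(c * p0 + s * p1)
      + (s ^ 2 * a - s * c * b - s * c * b' + c ^ 2 * d) := deriv_deriv_f hC2 hf θ
  have hl : L = s ^ 2 * a - 2 * s * c * b + c ^ 2 * d := by
    rw [hLdef]
    linear_combination hL2 - hE + s * c * hsym
  refine ⟨hFu, ?_, ?_, ?_, ?_, ?_, ?_⟩
  · linear_combination c * hE + s * hD - p0 * hp
  · linear_combination s * hE - c * hD - p1 * hp
  · linear_combination (-s^2) * hl + c * (1 + s^2) * hr0 - s * c^2 * hr2
      + (s * c * b - a - a * s^2) * hp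
  · linear_combination s * c * hl + s^3 * hr0 + c^3 * hr2 - b * (s^2 + c^2 + 1) * hp
  · rw [← hsym]
    linear_combination s * c * hl + s^3 * hr0 + c^3 * hr2 - b * (s^2 + c^2 + 1) * hp
  · linear_combination (-c^2) * hl + s * (1 + c^2) * hr2 - c * s^2 * hr0
      + (c * s * b - d - d * c^2) * hp

end Circle

end Aux17

/-- In dimension 2, the system `T^i_{jk} F_{y^i y^s} y^k y^j = F σ_s − σ₀ F_{y^s}`
(with `σ = (1,0)`) is equivalent to the scalar ODE
`(f'' + f)·P = f·sin θ + cos θ·f'` for the polar profile `f`. -/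
theorem stmt_17 (F : (Fin 2 → ℝ) → ℝ) (f : ℝ → ℝ)
    (hhom : ∀ c : ℝ, 0 < c → ∀ y : Fin 2 → ℝ, F (c • y) = c * F y)
    (hC2 : ContDiffOn ℝ 2 F {y : Fin 2 → ℝ | y ≠ 0})
    (hf : ∀ θ : ℝ, f θ = F ![Real.cos θ, Real.sin θ])
    (T : Fin 2 → Fin 2 → Fin 2 → ℝ)
    (hTsym : ∀ i j k, T i j k = T i k j)
    (σ : Fin 2 → ℝ) (hσ : ∀ i, σ i = if i = 0 then 1 else 0)
    (K0 K1 K2 K3 : ℝ)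
    (hK0 : K0 = -T 1 0 0) (hK1 : K1 = T 0 0 0 - 2 * T 1 0 1)
    (hK2 : K2 = 2 * T 0 0 1 - T 1 1 1) (hK3 : K3 = T 0 1 1)
    (P : ℝ → ℝ)
    (hP : ∀ θ : ℝ, P θ = K0 * Real.cos θ ^ 3 + K1 * Real.cos θ ^ 2 * Real.sin θ
      + K2 * Real.cos θ * Real.sin θ ^ 2 + K3 * Real.sin θ ^ 3) :
    (∀ y : Fin 2 → ℝ, y ≠ 0 → ∀ s : Fin 2,
        ∑ i, ∑ j, ∑ k, T i j k * pd2 F i s y * y k * y j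
          = F y * σ s - (∑ i, σ i * y i) * pd F s y)
    ↔ (∀ θ : ℝ, (deriv (deriv f) θ + f θ) * P θ
        = f θ * Real.sin θ + Real.cos θ * deriv f θ) := by
  have hσ0 : σ 0 = 1 := by rw [hσ]; norm_num
  have hσ1 : σ 1 = 0 := by rw [hσ]; norm_num
  constructor
  · intro h θ
    obtain ⟨hFu, hp0, hp1, hA, hB, hB', hD⟩ := Aux17.circle hhom hC2 hf θ
    set c := Real.cos θ with hc
    set s := Real.sin θ with hs
    set L := deriv (deriv f) θ + f θ with hL
    have hp : s ^ 2 + c ^ 2 = 1 := Real.sin_sq_add_cos_sq θ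
    have hPQ : P θ = -T 1 0 0 * c ^ 3 + (T 0 0 0 - 2 * T 1 0 1) * c ^ 2 * s
        + (2 * T 0 0 1 - T 1 1 1) * c * s ^ 2 + T 0 1 1 * s ^ 3 := by
      rw [hP, hK0, hK1, hK2, hK3]
    have hu0 : Aux17.u θ 0 = c := rfl
    have hu1 : Aux17.u θ 1 = s := rfl
    have E0 := h (Aux17.u θ) (Aux17.u_ne θ) 0
    have E1 := h (Aux17.u θ) (Aux17.u_ne θ) 1
    simp only [Fin.sum_univ_two] at E0 E1
    rw [← hTsym 0 0 1, ← hTsym 1 0 1, hu0, hu1, hσ0, hσ1, hFu, hA, hB', hp0] at E0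
    rw [← hTsym 0 0 1, ← hTsym 1 0 1, hu0, hu1, hσ0, hσ1, hFu, hB, hD, hp1] at E1
    have key0 : s * (L * P θ - (f θ * s + c * deriv f θ)) = 0 := by
      rw [hPQ]; linear_combination E0 - f θ * hp
    have key1 : c * (L * P θ - (f θ * s + c * deriv f θ)) = 0 := by
      rw [hPQ]; linear_combination -E1
    rcases eq_or_ne s 0 with hs0 | hs0
    · have hc0 : c ≠ 0 := by
        intro h0; rw [hs0, h0] at hp; norm_num at hp
      have := (mul_eq_zero.mp key1).resolve_left hc0
      linarith [this]
    · have := (mul_eq_zero.mp key0).resolve_left hs0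
      linarith [this]
  · intro h y hy sidx
    set z : ℂ := ⟨y 0, y 1⟩ with hzdef
    have hz0 : z ≠ 0 := by
      intro h0
      apply hy
      funext i
      fin_cases i
      · simpa using congrArg Complex.re h0
      · simpa using congrArg Complex.im h0
    set r := ‖z‖ with hrdef
    have hr : 0 < r := norm_pos_iff.mpr hz0
    set θ := Complex.arg z with hθdef
    set c := Real.cos θ with hc
    set s := Real.sin θ with hs
    have hp : s ^ 2 + c ^ 2 = 1 := Real.sin_sq_add_cos_sq θ
    have hy0 : y 0 = r * c := by
      rw [hc, hθdef, Complex.cos_arg hz0]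
      field_simp
      exact mul_comm _ _
    have hy1 : y 1 = r * s := by
      rw [hs, hθdef, Complex.sin_arg]
      field_simp
      exact mul_comm _ _
    have hyu : y = r • Aux17.u θ := by
      funext i
      fin_cases i
      · simpa [Aux17.u] using hy0
      · simpa [Aux17.u] using hy1
    obtain ⟨hFu, hp0, hp1, hA, hB, hB', hD⟩ := Aux17.circle hhom hC2 hf θ
    set L := deriv (deriv f) θ + f θ with hL
    have hODE := h θ
    have hPQ : P θ = -T 1 0 0 * c ^ 3 + (T 0 0 0 - 2 * T 1 0 1) * c ^ 2 * s
        + (2 * T 0 0 1 - T 1 1 1) * c * s ^ 2 + T 0 1 1 * s ^ 3 := by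
      rw [hP, hK0, hK1, hK2, hK3]
    have hFy : F y = r * f θ := by rw [hyu, hhom r hr, hFu]
    have hpdy : ∀ i, pd F i y = pd F i (Aux17.u θ) := fun i => by
      rw [hyu]; exact Aux17.pd_scale hhom hC2 hr (Aux17.u_ne θ) i
    have hpd2y : ∀ i s', r * pd2 F i s' y = pd2 F i s' (Aux17.u θ) := fun i s' => by
      rw [hyu]; exact Aux17.pd2_scale hhom hC2 hr (Aux17.u_ne θ) i s'
    have hA' : r * pd2 F 0 0 y = L * s ^ 2 := (hpd2y 0 0).trans hA
    have hB2 : r * pd2 F 0 1 y = -(L * s * c) := (hpd2y 0 1).trans hB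
    have hB2' : r * pd2 F 1 0 y = -(L * s * c) := (hpd2y 1 0).trans hB'
    have hD' : r * pd2 F 1 1 y = L * c ^ 2 := (hpd2y 1 1).trans hD
    fin_cases sidx
    · simp only [Fin.sum_univ_two, Fin.mk_zero, Fin.mk_one]
      rw [← hTsym 0 0 1, ← hTsym 1 0 1, hσ0, hσ1, hFy, hy0, hy1, hpdy 0, hp0]
      linear_combination (r * (T 0 0 0 * c ^ 2 + 2 * T 0 0 1 * c * s + T 0 1 1 * s ^ 2)) * hA'
        + (r * (T 1 0 0 * c ^ 2 + 2 * T 1 0 1 * c * s + T 1 1 1 * s ^ 2)) * hB2'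
        + r * s * hODE - r * s * L * hPQ + r * f θ * hp
    · simp only [Fin.sum_univ_two, Fin.mk_zero, Fin.mk_one]
      rw [← hTsym 0 0 1, ← hTsym 1 0 1, hσ0, hσ1, hFy, hy0, hy1, hpdy 1, hp1]
      linear_combination (r * (T 0 0 0 * c ^ 2 + 2 * T 0 0 1 * c * s + T 0 1 1 * s ^ 2)) * hB2
        + (r * (T 1 0 0 * c ^ 2 + 2 * T 1 0 1 * c * s + T 1 1 1 * s ^ 2)) * hD'
        - r * c * hODE + r * c * L * hPQ
end
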